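/- arXiv:1002.4350 — 2 statements merged into one kernel-verified Lean document; each statement's English description precedes it below -/
import Mathlib

section
/- Let Γ be a connected multigraph with finite vertex set V. Then every generator c_v of the lattice Λ has coordinate sum zero, so that Λ is contained in Z = {d ∈ ℤ^V : Σ_v d(v) = 0}, and the degree class group Δ = Z/Λ is a finite abelian group. -/
open Finset

noncomputable section
open scoped Classical

variable {V : Type} [Fintype V] [DecidableEq V]

/-- The simple graph underlying a multigraph with multiplicity function `k`:
`u` and `v` are adjacent iff `u ≠ v` and some edge joins them. -/
def graphOf (k : V → V → ℕ) : SimpleGraph V where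
  Adj u v := u ≠ v ∧ (0 < k u v ∨ 0 < k v u)
  symm := ⟨fun u v h => ⟨h.1.symm, h.2.symm⟩⟩
  loopless := ⟨fun v h => h.1 rfl⟩

/-- The number of edges of a multigraph: loops plus half the ordered count. -/
def numEdges (k : V → V → ℕ) : ℕ :=
  (∑ v, k v v) + (∑ u, ∑ v ∈ Finset.univ.erase u, k u v) / 2

/-- The genus of a weighted graph: `∑ w(v) + b₁`, with `b₁ = #E - #V + 1`. -/
def genus (k : V → V → ℕ) (w : V → ℕ) : ℤ :=
  (∑ v, (w v : ℤ)) + ((numEdges k : ℤ) - (Fintype.card V : ℤ) + 1)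

/-- Stability: connected, and each weight-zero vertex has valency at least 3. -/
def IsStable (k : V → V → ℕ) (w : V → ℕ) : Prop :=
  (graphOf k).Connected ∧
    ∀ v, w v = 0 → 3 ≤ 2 * k v v + ∑ u ∈ Finset.univ.erase v, k u v

/-- `δ_A`: the number of edges joining `A` to its complement. -/
def deltaA (k : V → V → ℕ) (A : Finset V) : ℤ :=
  ∑ u ∈ A, ∑ v ∈ Aᶜ, (k u v : ℤ)

/-- `w_A = Σ_{v∈A} (2w(v) − 2 + 2k(v,v) + Σ_{u≠v} k(u,v))`. -/
def wA (k : V → V → ℕ) (w : V → ℕ) (A : Finset V) : ℤ :=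
  ∑ v ∈ A, (2 * (w v : ℤ) - 2 + 2 * (k v v : ℤ) + ∑ u ∈ Finset.univ.erase v, (k u v : ℤ))

/-- `d_A`: the total degree of a multidegree on the subset `A`. -/
def degA (d : V → ℤ) (A : Finset V) : ℤ := ∑ v ∈ A, d v

/-- `m_A(d) = d·w_A/(2g−2) − δ_A/2 ∈ ℚ`. -/
def mA (k : V → V → ℕ) (w : V → ℕ) (D : ℤ) (A : Finset V) : ℚ :=
  (D : ℚ) * (wA k w A : ℚ) / ((2 * genus k w - 2 : ℤ) : ℚ) - (deltaA k A : ℚ) / 2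

/-- A balanced multidegree of total degree `D`. -/
def IsBalanced (k : V → V → ℕ) (w : V → ℕ) (D : ℤ) (d : V → ℤ) : Prop :=
  degA d Finset.univ = D ∧ ∀ A : Finset V, mA k w D A ≤ (degA d A : ℚ)

/-- A strictly balanced multidegree of total degree `D`. -/
def IsStrictlyBalanced (k : V → V → ℕ) (w : V → ℕ) (D : ℤ) (d : V → ℤ) : Prop :=
  IsBalanced k w D d ∧
    ∀ A : Finset V, A ≠ ∅ → A ≠ Finset.univ → mA k w D A < (degA d A : ℚ)

/-- `(Γ,w)` is `d`-general if every balanced multidegree of total degree `d`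
is strictly balanced. -/
def IsDGeneral (k : V → V → ℕ) (w : V → ℕ) (D : ℤ) : Prop :=
  ∀ d : V → ℤ, IsBalanced k w D d → IsStrictlyBalanced k w D d

/-- The generator `c_v` of the lattice `Λ`. -/
def cvec (k : V → V → ℕ) (v : V) : V → ℤ := fun u =>
  if u = v then -(∑ x ∈ Finset.univ.erase v, (k x v : ℤ)) else (k u v : ℤ)

/-- The lattice `Λ ⊆ ℤ^V` generated by the `c_v`. -/
def Lambda (k : V → V → ℕ) : AddSubgroup (V → ℤ) :=
  AddSubgroup.closure (Set.range (cvec k))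

/-- The total-degree homomorphism `ℤ^V → ℤ`. -/
def sumHom (V : Type) [Fintype V] : (V → ℤ) →+ ℤ :=
  { toFun := fun d => ∑ v, d v
    map_zero' := by simp
    map_add' := fun a b => by simp [Finset.sum_add_distrib] }

/-- `Z = {d ∈ ℤ^V : Σ_v d(v) = 0}`. -/
def Zsub (V : Type) [Fintype V] : AddSubgroup (V → ℤ) := (sumHom V).ker

/-- Remove the edge(s) joining `a` and `b` from the multigraph. -/
def removeEdge (k : V → V → ℕ) (a b : V) : V → V → ℕ := fun u v =>
  if (u = a ∧ v = b) ∨ (u = b ∧ v = a) then 0 else k u v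

/-- `a`–`b` is a bridge: a single non-loop edge whose removal disconnects the graph. -/
def IsBridge (k : V → V → ℕ) (a b : V) : Prop :=
  a ≠ b ∧ k a b = 1 ∧ ¬ (graphOf (removeEdge k a b)).Connected

/-- `A` induces a connected sub-multigraph. -/
def IsConnectedSubset (k : V → V → ℕ) (A : Finset V) : Prop :=
  ((graphOf k).induce (A : Set V)).Connected

/-- The equivalence relation `≈` on `V` generated by bridges. -/
def contractSetoid (k : V → V → ℕ) : Setoid V :=
  ⟨Relation.EqvGen (fun u v => IsBridge k u v), Relation.EqvGen.is_equivalence _⟩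

/-- The vertex set `V² = V/≈` of the contracted graph `Γ²`. -/
def V2 (k : V → V → ℕ) : Type := Quotient (contractSetoid k)

instance (k : V → V → ℕ) : Finite (V2 k) := Quotient.finite _

instance (k : V → V → ℕ) : Fintype (V2 k) := Fintype.ofFinite _

/-- The fiber of the quotient map `φ : V → V²` over a class `c`. -/
def fiber (k : V → V → ℕ) (c : V2 k) : Finset V :=
  Finset.univ.filter (fun v => Quotient.mk (contractSetoid k) v = c)

/-- The multiplicity function `k²` of the contracted graph `Γ²`. -/
def k2 (k : V → V → ℕ) : V2 k → V2 k → ℕ := fun c c' =>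
  if c = c' then
    (∑ v ∈ fiber k c, k v v) +
      (∑ u ∈ fiber k c, ∑ v ∈ (fiber k c).erase u,
        if IsBridge k u v then 0 else k u v) / 2
  else ∑ u ∈ fiber k c, ∑ v ∈ fiber k c', k u v

/-- The weight function `w²` of the contracted weighted graph `(Γ²,w²)`. -/
def w2 (k : V → V → ℕ) (w : V → ℕ) : V2 k → ℕ := fun c => ∑ v ∈ fiber k c, w v

/-- The pushforward `α(d)` of a multidegree to the contracted graph. -/
def alphaMap (k : V → V → ℕ) (d : V → ℤ) : V2 k → ℤ := fun c => ∑ v ∈ fiber k c, d v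

/-- The setoid on multidegrees of total degree `D`: two are equivalent if their
difference lies in `Λ`; the quotient is `Δ^d`. -/
def degSetoid (k : V → V → ℕ) (D : ℤ) : Setoid {d : V → ℤ // (∑ v, d v) = D} :=
  ⟨fun a b => (a : V → ℤ) - (b : V → ℤ) ∈ Lambda k, by
    constructor
    · intro a; simpa using (Lambda k).zero_mem
    · intro a b h; have h2 := (Lambda k).neg_mem h; rwa [neg_sub] at h2
    · intro a b c h1 h2
      have h3 := (Lambda k).add_mem h1 h2
      rwa [sub_add_sub_cancel] at h3⟩

/-- Number of edges of the sub-multigraph induced on `A`. -/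
def numEdgesIn (k : V → V → ℕ) (A : Finset V) : ℕ :=
  (∑ v ∈ A, k v v) + (∑ u ∈ A, ∑ v ∈ A.erase u, k u v) / 2

/-- Blow-up of a multigraph at the single bridge `a`–`b`: one exceptional
vertex is inserted in the middle of the bridge. -/
def blowK (k : V → V → ℕ) (a b : V) : (V ⊕ Unit) → (V ⊕ Unit) → ℕ
  | Sum.inl u, Sum.inl v => if (u = a ∧ v = b) ∨ (u = b ∧ v = a) then 0 else k u v
  | Sum.inl u, Sum.inr _ => if u = a ∨ u = b then 1 else 0
  | Sum.inr _, Sum.inl v => if v = a ∨ v = b then 1 else 0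
  | Sum.inr _, Sum.inr _ => 0

/-- Weight function of the blow-up at one bridge: exceptional vertex has weight 0. -/
def blowW (w : V → ℕ) : V ⊕ Unit → ℕ
  | Sum.inl v => w v
  | Sum.inr _ => 0

/-- Blow-up of a multigraph at a set `S` of bridges (given as ordered pairs):
one exceptional vertex is inserted in the middle of each bridge of `S`. -/
def blowKS (k : V → V → ℕ) (S : Finset (V × V)) :
    (V ⊕ {p : V × V // p ∈ S}) → (V ⊕ {p : V × V // p ∈ S}) → ℕ
  | Sum.inl u, Sum.inl v => if (u, v) ∈ S ∨ (v, u) ∈ S then 0 else k u v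
  | Sum.inl u, Sum.inr e => if u = e.1.1 ∨ u = e.1.2 then 1 else 0
  | Sum.inr e, Sum.inl v => if v = e.1.1 ∨ v = e.1.2 then 1 else 0
  | Sum.inr _, Sum.inr _ => 0

/-- Weight function of the blow-up at a set of bridges. -/
def blowWS (w : V → ℕ) (S : Finset (V × V)) : (V ⊕ {p : V × V // p ∈ S}) → ℕ
  | Sum.inl v => w v
  | Sum.inr _ => 0

/-- Strictly balanced multidegree of total degree `D` on the blow-up `Γ̂_S`:
balanced (with degree 1 on each exceptional vertex), and the inequality is
strict for every proper nonempty `A` such that some edge between `A` and its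
complement has no exceptional endpoint. -/
def IsStrictlyBalancedBlowS (k : V → V → ℕ) (w : V → ℕ) (S : Finset (V × V)) (D : ℤ)
    (dh : (V ⊕ {p : V × V // p ∈ S}) → ℤ) : Prop :=
  IsBalanced (blowKS k S) (blowWS w S) D dh ∧
    (∀ e : {p : V × V // p ∈ S}, dh (Sum.inr e) = 1) ∧
    ∀ A : Finset (V ⊕ {p : V × V // p ∈ S}), A ≠ ∅ → A ≠ Finset.univ →
      (∃ u v : V, Sum.inl u ∈ A ∧ Sum.inl v ∉ A ∧ 0 < blowKS k S (Sum.inl u) (Sum.inl v)) →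
      mA (blowKS k S) (blowWS w S) D A < (degA dh A : ℚ)

/-- Multiplicity function of the vine graph: two vertices joined by `δ` edges,
no loops. -/
def vineK (δ : ℕ) : Fin 2 → Fin 2 → ℕ := fun u v => if u = v then 0 else δ

/-- Weight function of the vine graph with weights `g₁, g₂`. -/
def vineW (g1 g2 : ℕ) : Fin 2 → ℕ := fun v => if v = 0 then g1 else g2

/-- The data of a stable vine graph of genus `g` with weights `g₁, g₂` and `δ` edges. -/
def StableVine (g : ℤ) (g1 g2 δ : ℕ) : Prop :=
  2 ≤ δ ∧ ((g1 = 0 ∨ g2 = 0) → 3 ≤ δ) ∧ (g1 : ℤ) + (g2 : ℤ) + (δ : ℤ) - 1 = g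

section Stmt0Aux

variable {V : Type} [Fintype V] [DecidableEq V]

lemma cvec_sum (k : V → V → ℕ) (v : V) : ∑ u, cvec k v u = 0 := by
  rw [← Finset.add_sum_erase _ _ (Finset.mem_univ v)]
  have h1 : cvec k v v = -(∑ x ∈ Finset.univ.erase v, (k x v : ℤ)) := by simp [cvec]
  have h2 : ∑ u ∈ Finset.univ.erase v, cvec k v u = ∑ u ∈ Finset.univ.erase v, (k u v : ℤ) :=
    Finset.sum_congr rfl fun u hu => by simp [cvec, (Finset.mem_erase.mp hu).1]
  rw [h1, h2]; ring

lemma cvec_sum' (k : V → V → ℕ) (hsym : ∀ u v, k u v = k v u) (u : V) :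
    ∑ v, cvec k v u = 0 := by
  rw [← Finset.add_sum_erase _ _ (Finset.mem_univ u)]
  have h1 : cvec k u u = -(∑ x ∈ Finset.univ.erase u, (k x u : ℤ)) := by simp [cvec]
  have h2 : ∑ v ∈ Finset.univ.erase u, cvec k v u = ∑ v ∈ Finset.univ.erase u, (k v u : ℤ) :=
    Finset.sum_congr rfl fun v hv => by
      have hne : ¬ (u = v) := fun h => (Finset.mem_erase.mp hv).1 h.symm
      simp [cvec, hne, hsym u v]
  rw [h1, h2]; ring

/-- The generators `c_v` viewed as rational vectors. -/
def cQ (k : V → V → ℕ) : V → (V → ℚ) := fun v u => ((cvec k v u : ℤ) : ℚ)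

lemma sum_smul_cQ_apply (k : V → V → ℕ) (hsym : ∀ u v, k u v = k v u) (x : V → ℚ) (u : V) :
    (∑ v, x v • cQ k v) u = ∑ v ∈ Finset.univ.erase u, (k u v : ℚ) * (x v - x u) := by
  have h0 : (∑ v, x v • cQ k v) u = ∑ v, x v * cQ k v u := by
    rw [Finset.sum_apply]; rfl
  rw [h0, ← Finset.add_sum_erase _ _ (Finset.mem_univ u)]
  have hu : cQ k u u = -(∑ w ∈ Finset.univ.erase u, (k u w : ℚ)) := by
    show ((cvec k u u : ℤ) : ℚ) = _
    have : cvec k u u = -(∑ x ∈ Finset.univ.erase u, (k x u : ℤ)) := by simp [cvec]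
    rw [this]
    push_cast
    exact neg_inj.mpr (Finset.sum_congr rfl fun w _ => by rw [hsym w u])
  have hv : ∀ v ∈ Finset.univ.erase u, x v * cQ k v u = (k u v : ℚ) * x v := by
    intro v hv
    have hne : ¬ (u = v) := fun h => (Finset.mem_erase.mp hv).1 h.symm
    show x v * ((cvec k v u : ℤ) : ℚ) = _
    simp [cvec, hne, mul_comm]
  rw [Finset.sum_congr rfl hv, hu,
    Finset.sum_congr rfl (fun v _ => mul_sub ((k u v : ℚ)) (x v) (x u)),
    Finset.sum_sub_distrib, ← Finset.sum_mul]
  ring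

lemma const_of_harmonic (k : V → V → ℕ) (hsym : ∀ u v, k u v = k v u)
    (hconn : (graphOf k).Connected) (x : V → ℚ)
    (hx : ∀ u, ∑ v ∈ Finset.univ.erase u, (k u v : ℚ) * (x v - x u) = 0) :
    ∃ c : ℚ, x = fun _ => c := by
  have hne : Nonempty V := hconn.nonempty
  obtain ⟨u0, -, hmax⟩ := Finset.exists_max_image Finset.univ x
    ⟨Classical.arbitrary V, Finset.mem_univ _⟩
  refine ⟨x u0, funext fun b => ?_⟩
  have step : ∀ a b : V, (graphOf k).Adj a b → x a = x u0 → x b = x u0 := by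
    intro a b hab ha
    have hnonpos : ∀ v ∈ Finset.univ.erase a, (k a v : ℚ) * (x v - x a) ≤ 0 := by
      intro v _
      have hva : x v ≤ x a := by rw [ha]; exact hmax v (Finset.mem_univ v)
      have h1 : (0:ℚ) ≤ (k a v : ℚ) := Nat.cast_nonneg _
      nlinarith
    have hz := (Finset.sum_eq_zero_iff_of_nonpos hnonpos).mp (hx a) b
      (Finset.mem_erase.mpr ⟨Ne.symm hab.1, Finset.mem_univ b⟩)
    have hk0 : 0 < k a b := by
      rcases hab.2 with h | h
      · exact h
      · rwa [hsym a b]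
    have hk : (0:ℚ) < (k a b : ℚ) := by exact_mod_cast hk0
    rcases mul_eq_zero.mp hz with h | h
    · exact absurd h (ne_of_gt hk)
    · have : x b = x a := by linarith
      rw [this, ha]
  have walk : ∀ (a b : V) (p : (graphOf k).Walk a b), x a = x u0 → x b = x u0 := by
    intro a b p
    induction p with
    | nil => exact id
    | cons h _ ih => exact fun ha => ih (step _ _ h ha)
  obtain ⟨p⟩ := hconn.preconnected u0 b
  exact walk u0 b p rfl

end Stmt0Aux

/-- For a connected multigraph, every generator `c_v` of `Λ` has
coordinate sum zero, `Λ ⊆ Z`, and the degree class group `Δ = Z/Λ` is finite. -/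
theorem stmt0 (V : Type) [Fintype V] [DecidableEq V] (k : V → V → ℕ)
    (hsym : ∀ u v, k u v = k v u) (hconn : (graphOf k).Connected) :
    (∀ v, ∑ u, cvec k v u = 0) ∧ Lambda k ≤ Zsub V ∧
      Finite (↥(Zsub V) ⧸ (Lambda k).addSubgroupOf (Zsub V)) := by
  classical
  have hne : Nonempty V := hconn.nonempty
  have part1 : ∀ v, ∑ u, cvec k v u = 0 := cvec_sum k
  have hgen : ∀ v, cvec k v ∈ Zsub V := fun v => part1 v
  have hΛZ : Lambda k ≤ Zsub V := by
    rw [Lambda]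
    exact (AddSubgroup.closure_le _).mpr (by rintro _ ⟨v, rfl⟩; exact hgen v)
  refine ⟨part1, hΛZ, ?_⟩
  -- rational linear algebra
  set L : (V → ℚ) →ₗ[ℚ] (V → ℚ) := Fintype.linearCombination ℚ (cQ k) with hLdef
  have hLapp : ∀ x : V → ℚ, L x = ∑ v, x v • cQ k v := fun x =>
    Fintype.linearCombination_apply ℚ (cQ k) x
  have hc1ne : (fun _ : V => (1:ℚ)) ≠ 0 := by
    intro h
    have := congrFun h (Classical.arbitrary V)
    simp at this
  -- kernel of L is the constants
  have hkerL : LinearMap.ker L = Submodule.span ℚ {(fun _ : V => (1:ℚ))} := by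
    apply le_antisymm
    · intro x hx
      have hx0 : ∑ v, x v • cQ k v = 0 := by
        rw [← hLapp]; exact LinearMap.mem_ker.mp hx
      have hxh : ∀ u, ∑ v ∈ Finset.univ.erase u, (k u v : ℚ) * (x v - x u) = 0 := by
        intro u
        rw [← sum_smul_cQ_apply k hsym x u, hx0]
        rfl
      obtain ⟨c, hc⟩ := const_of_harmonic k hsym hconn x hxh
      rw [Submodule.mem_span_singleton]
      exact ⟨c, by rw [hc]; funext u; simp⟩
    · rw [Submodule.span_le, Set.singleton_subset_iff]
      have : L (fun _ => (1:ℚ)) = 0 := by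
        rw [hLapp]
        funext u
        rw [Finset.sum_apply]
        have : ∀ v ∈ Finset.univ, ((1:ℚ) • cQ k v) u = ((cvec k v u : ℤ) : ℚ) := by
          intro v _; simp [cQ]
        rw [Finset.sum_congr rfl this, ← Int.cast_sum, cvec_sum' k hsym u]
        simp
      exact LinearMap.mem_ker.mpr this
  have hkerrank : Module.finrank ℚ (LinearMap.ker L) = 1 := by
    rw [hkerL]; exact finrank_span_singleton hc1ne
  have hrnL := LinearMap.finrank_range_add_finrank_ker L
  rw [hkerrank, Module.finrank_pi ℚ] at hrnL
  -- the sum functional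
  set sl : (V → ℚ) →ₗ[ℚ] ℚ := Fintype.linearCombination ℚ (fun _ : V => (1:ℚ)) with hsldef
  have hslapp : ∀ x : V → ℚ, sl x = ∑ v, x v := by
    intro x
    rw [hsldef, Fintype.linearCombination_apply]
    simp
  have hslsurj : LinearMap.range sl = ⊤ := by
    rw [LinearMap.range_eq_top]
    intro c
    refine ⟨Pi.single (Classical.arbitrary V) c, ?_⟩
    rw [hsldef, Fintype.linearCombination_apply_single]
    simp
  have hrnS := LinearMap.finrank_range_add_finrank_ker sl
  rw [hslsurj, finrank_top, Module.finrank_self, Module.finrank_pi ℚ] at hrnS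
  -- range L = sum-zero subspace
  have hle : LinearMap.range L ≤ LinearMap.ker sl := by
    rw [hLdef, Fintype.range_linearCombination, Submodule.span_le]
    rintro _ ⟨v, rfl⟩
    refine LinearMap.mem_ker.mpr ?_
    rw [hslapp]
    show ∑ u, ((cvec k v u : ℤ) : ℚ) = 0
    rw [← Int.cast_sum, cvec_sum k v]
    simp
  have hfr : Module.finrank ℚ (LinearMap.range L) = Module.finrank ℚ (LinearMap.ker sl) := by
    omega
  have hEq : LinearMap.range L = LinearMap.ker sl :=
    Submodule.eq_of_le_of_finrank_eq hle hfr
  -- torsion: every sum-zero integer vector has a multiple in Λ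
  have key : ∀ d : V → ℤ, (∑ v, d v) = 0 → ∃ n : ℤ, n ≠ 0 ∧ n • d ∈ Lambda k := by
    intro d hd
    have hdQ : (fun u => ((d u : ℤ) : ℚ)) ∈ LinearMap.ker sl := by
      refine LinearMap.mem_ker.mpr ?_
      rw [hslapp, ← Int.cast_sum, hd]
      simp
    rw [← hEq] at hdQ
    obtain ⟨x, hx⟩ := hdQ
    obtain ⟨b, hb⟩ := IsLocalization.exist_integer_multiples_of_finite
      (nonZeroDivisors ℤ) (S := ℚ) x
    choose a ha using hb
    refine ⟨(b : ℤ), nonZeroDivisors.coe_ne_zero b, ?_⟩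
    have haQ : ∀ v, (a v : ℚ) = ((b : ℤ) : ℚ) * x v := by
      intro v
      have := ha v
      rw [show (algebraMap ℤ ℚ) (a v) = ((a v : ℤ) : ℚ) from rfl] at this
      rw [this, zsmul_eq_mul]
    have hxu : ∀ u, ∑ v, x v * cQ k v u = (d u : ℚ) := by
      intro u
      have h1 := congrFun hx u
      rw [hLapp] at h1
      rw [← h1, Finset.sum_apply]
      rfl
    have hsum : (b : ℤ) • d = ∑ v, a v • cvec k v := by
      funext u
      apply Int.cast_injective (α := ℚ)
      have hR : (((∑ v, a v • cvec k v) u : ℤ) : ℚ) = ∑ v, (a v : ℚ) * cQ k v u := by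
        rw [Finset.sum_apply]
        push_cast [Pi.smul_apply, smul_eq_mul]
        rfl
      have hLc : ((((b : ℤ) • d) u : ℤ) : ℚ) = ((b : ℤ) : ℚ) * (d u : ℚ) := by
        simp [Pi.smul_apply, smul_eq_mul]
      rw [hLc, hR]
      rw [← hxu u, Finset.mul_sum]
      exact Finset.sum_congr rfl fun v _ => by rw [haQ v]; ring
    rw [hsum, Lambda]
    exact AddSubgroup.sum_mem _ fun v _ =>
      AddSubgroup.zsmul_mem _ (AddSubgroup.subset_closure (Set.mem_range_self v)) _
  -- finiteness of the quotient
  have h1 : (AddSubgroup.toIntSubmodule (Zsub V)).FG := IsNoetherian.noetherian _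
  have h2 : (Zsub V).FG := by
    rwa [Submodule.fg_iff_addSubgroup_fg, AddSubgroup.toIntSubmodule_toAddSubgroup] at h1
  haveI hFG : AddGroup.FG ↥(Zsub V) := (AddGroup.fg_iff_addSubgroup_fg _).mpr h2
  have htor : AddMonoid.IsTorsion (↥(Zsub V) ⧸ (Lambda k).addSubgroupOf (Zsub V)) := by
    intro q
    obtain ⟨d, rfl⟩ := QuotientAddGroup.mk'_surjective _ q
    have hd0 : (∑ v, (d : V → ℤ) v) = 0 := d.2
    obtain ⟨n, hn0, hnd⟩ := key (d : V → ℤ) hd0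
    rw [isOfFinAddOrder_iff_nsmul_eq_zero]
    refine ⟨n.natAbs, Int.natAbs_pos.mpr hn0, ?_⟩
    rw [← map_nsmul, QuotientAddGroup.mk'_apply, QuotientAddGroup.eq_zero_iff,
      AddSubgroup.mem_addSubgroupOf]
    have hcoe : ((n.natAbs • d : ↥(Zsub V)) : V → ℤ) = (n.natAbs : ℤ) • (d : V → ℤ) := by
      rw [natCast_zsmul]
      rfl
    rw [hcoe]
    rcases Int.natAbs_eq n with h | h
    · rwa [← h]
    · have : (n.natAbs : ℤ) • (d : V → ℤ) = -(n • (d : V → ℤ)) := by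
        rw [← neg_smul]
        congr 1
        omega
      rw [this]
      exact neg_mem hnd
  exact AddCommGroup.finite_of_fg_torsion _ htor
end
end

section
/- Let (Γ,w) be a stable weighted graph of genus g ≥ 2 and let d be an integer. Then every equivalence class in Δ^d (multidegrees of total degree d modulo Λ) contains a balanced multidegree. -/
open Finset

noncomputable section
open scoped Classical

variable {V : Type} [Fintype V] [DecidableEq V]

/-! ### Auxiliary lemmas for stmt2 -/

lemma even_T_aux (k : V → V → ℕ) (hsym : ∀ u v, k u v = k v u) :
    Even (∑ u, ∑ v ∈ Finset.univ.erase u, k u v) := by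
  letI : LinearOrder V := LinearOrder.lift' (Fintype.equivFin V) (Fintype.equivFin V).injective
  have split : ∀ u : V, (Finset.univ.erase u) =
      (Finset.univ.filter (fun v => v < u)) ∪ (Finset.univ.filter (fun v => u < v)) := by
    intro u; ext v
    simp [lt_or_gt_of_ne, Ne.symm, eq_comm]
  have hdisj : ∀ u : V, Disjoint (Finset.univ.filter (fun v => v < u))
      (Finset.univ.filter (fun v => u < v)) := by
    intro u
    simp only [Finset.disjoint_filter]
    intro v _ h1 h2
    exact absurd (lt_trans h1 h2) (lt_irrefl v)
  have hT : (∑ u, ∑ v ∈ Finset.univ.erase u, k u v) =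
      (∑ u, ∑ v ∈ Finset.univ.filter (fun v => v < u), k u v) +
      (∑ u, ∑ v ∈ Finset.univ.filter (fun v => u < v), k u v) := by
    rw [← Finset.sum_add_distrib]
    refine Finset.sum_congr rfl fun u _ => ?_
    rw [split u, Finset.sum_union (hdisj u)]
  have hswap : (∑ u, ∑ v ∈ Finset.univ.filter (fun v => v < u), k u v) =
      (∑ u, ∑ v ∈ Finset.univ.filter (fun v => u < v), k u v) := by
    rw [Finset.sum_comm' (s' := fun y => Finset.univ.filter (fun x => y < x)) (t' := Finset.univ)
      (by intro x y; simp)]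
    refine Finset.sum_congr rfl fun u _ => Finset.sum_congr rfl fun v _ => hsym v u
  rw [hT, ← hswap]
  exact ⟨_, rfl⟩

/-- `w_V = 2g - 2`. -/
lemma wA_univ_eq (k : V → V → ℕ) (w : V → ℕ) (hsym : ∀ u v, k u v = k v u) :
    wA k w Finset.univ = 2 * genus k w - 2 := by
  have hev := even_T_aux k hsym
  obtain ⟨T, hT⟩ := hev
  have hdiv : (∑ u, ∑ v ∈ Finset.univ.erase u, k u v) / 2 = T := by omega
  have hTswap : (∑ v : V, ∑ u ∈ Finset.univ.erase v, (k u v : ℤ)) =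
      ((∑ u, ∑ v ∈ Finset.univ.erase u, k u v : ℕ) : ℤ) := by
    push_cast
    refine Finset.sum_congr rfl fun v _ => Finset.sum_congr rfl fun u _ => by rw [hsym]
  unfold wA genus numEdges
  rw [hdiv]
  rw [Finset.sum_add_distrib, Finset.sum_add_distrib, Finset.sum_sub_distrib, hTswap, hT]
  push_cast
  simp [Finset.sum_const, Finset.card_univ]
  rw [← Finset.mul_sum, ← Finset.mul_sum]
  ring

/-- The Laplacian shift `∑ v, z v • c_v` written pointwise. -/
def czv (k : V → V → ℕ) (z : V → ℤ) : V → ℤ := fun u => ∑ v, (k u v : ℤ) * (z v - z u)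

/-- Twice the Dirichlet energy. -/
def Bf2 (k : V → V → ℕ) (z : V → ℤ) : ℤ := ∑ u, ∑ v, (k u v : ℤ) * (z u - z v) ^ 2

/-- The associated bilinear form. -/
def Cf (k : V → V → ℕ) (z y : V → ℤ) : ℤ :=
  ∑ u, ∑ v, (k u v : ℤ) * (z u - z v) * (y u - z v + (z v - y v))

lemma Cf_def (k : V → V → ℕ) (z y : V → ℤ) :
    Cf k z y = ∑ u, ∑ v, (k u v : ℤ) * (z u - z v) * (y u - y v) := by
  unfold Cf
  refine Finset.sum_congr rfl fun u _ => Finset.sum_congr rfl fun v _ => by ring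

lemma czv_eq_sum_smul (k : V → V → ℕ) (hsym : ∀ u v, k u v = k v u) (z : V → ℤ) :
    czv k z = ∑ v, z v • cvec k v := by
  funext u
  rw [Finset.sum_apply]
  unfold czv cvec
  rw [← Finset.add_sum_erase _ _ (Finset.mem_univ u), ← Finset.add_sum_erase _ _ (Finset.mem_univ u)]
  simp only [Pi.smul_apply, smul_eq_mul, if_pos rfl]
  have h1 : ∀ v ∈ Finset.univ.erase u, z v * (if u = v then -(∑ x ∈ Finset.univ.erase v, (k x v : ℤ)) else (k u v : ℤ)) = (k u v : ℤ) * z v := by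
    intro v hv
    rw [if_neg (Ne.symm (Finset.ne_of_mem_erase hv))]
    exact mul_comm _ _
  rw [Finset.sum_congr rfl h1]
  have h2 : ∀ v ∈ Finset.univ.erase u, (k u v : ℤ) * (z v - z u) = (k u v : ℤ) * z v - (k u v : ℤ) * z u := fun v _ => by ring
  rw [Finset.sum_congr rfl h2, Finset.sum_sub_distrib]
  have h3 : (∑ x ∈ Finset.univ.erase u, (k x u : ℤ)) = ∑ x ∈ Finset.univ.erase u, (k u x : ℤ) := by
    refine Finset.sum_congr rfl fun x _ => by rw [hsym]
  rw [h3, ← Finset.sum_mul]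
  simp
  ring

lemma czv_mem_Lambda (k : V → V → ℕ) (hsym : ∀ u v, k u v = k v u) (z : V → ℤ) :
    czv k z ∈ Lambda k := by
  rw [czv_eq_sum_smul k hsym z]
  refine sum_mem fun v _ => ?_
  exact AddSubgroup.zsmul_mem _ (AddSubgroup.subset_closure (Set.mem_range_self v)) _

lemma sum_czv (k : V → V → ℕ) (hsym : ∀ u v, k u v = k v u) (z : V → ℤ) :
    ∑ u, czv k z u = 0 := by
  unfold czv
  have h : (∑ u, ∑ v, (k u v : ℤ) * (z v - z u)) = ∑ v, ∑ u, (k u v : ℤ) * (z v - z u) :=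
    Finset.sum_comm
  have h2 : (∑ v : V, ∑ u : V, (k u v : ℤ) * (z v - z u)) =
      - ∑ u, ∑ v, (k u v : ℤ) * (z v - z u) := by
    rw [← Finset.sum_neg_distrib]
    refine Finset.sum_congr rfl fun v _ => ?_
    rw [← Finset.sum_neg_distrib]
    refine Finset.sum_congr rfl fun u _ => ?_
    rw [hsym]; ring
  omega

lemma Bf2_expand (k : V → V → ℕ) (z y : V → ℤ) :
    Bf2 k (z + y) = Bf2 k z + 2 * Cf k z y + Bf2 k y := by
  unfold Bf2
  rw [Cf_def]
  have : ∀ u v : V, (k u v : ℤ) * ((z + y) u - (z + y) v) ^ 2 =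
      (k u v : ℤ) * (z u - z v) ^ 2 + 2 * ((k u v : ℤ) * (z u - z v) * (y u - y v))
        + (k u v : ℤ) * (y u - y v) ^ 2 := by
    intro u v; simp only [Pi.add_apply]; ring
  simp only [this, Finset.sum_add_distrib, Finset.mul_sum]

lemma Cf_eq_sum (k : V → V → ℕ) (hsym : ∀ u v, k u v = k v u) (z y : V → ℤ) :
    Cf k z y = -2 * ∑ u, y u * czv k z u := by
  have hS : (∑ u, y u * czv k z u) = ∑ u, ∑ v, (k u v : ℤ) * y u * (z v - z u) := by
    unfold czv
    refine Finset.sum_congr rfl fun u _ => ?_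
    rw [Finset.mul_sum]
    refine Finset.sum_congr rfl fun v _ => by ring
  have hS2 : (∑ u : V, ∑ v : V, (k u v : ℤ) * y u * (z v - z u)) =
      ∑ u : V, ∑ v : V, (k u v : ℤ) * y v * (z u - z v) := by
    rw [Finset.sum_comm]
    refine Finset.sum_congr rfl fun v _ => Finset.sum_congr rfl fun u _ => by rw [hsym]
  rw [Cf_def]
  have : ∀ u v : V, (k u v : ℤ) * (z u - z v) * (y u - y v) =
      -((k u v : ℤ) * y u * (z v - z u)) - (k u v : ℤ) * y v * (z u - z v) := by
    intro u v; ring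
  simp only [this, Finset.sum_sub_distrib, Finset.sum_neg_distrib]
  rw [← hS2, ← hS]
  ring

lemma sum_ite_mem_eq (A : Finset V) (f : V → ℤ) :
    (∑ v, if v ∈ A then f v else 0) = ∑ v ∈ A, f v := by
  rw [Finset.sum_ite_mem]
  simp

lemma sum_ite_not_mem_eq (A : Finset V) (f : V → ℤ) :
    (∑ v, if v ∈ A then 0 else f v) = ∑ v ∈ Aᶜ, f v := by
  have : ∀ v : V, (if v ∈ A then 0 else f v) = (if v ∈ Aᶜ then f v else 0) := by
    intro v
    by_cases h : v ∈ A <;> simp [h]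
  simp only [this]
  exact _root_.sum_ite_mem_eq Aᶜ f

lemma Bf2_indicator (k : V → V → ℕ) (hsym : ∀ u v, k u v = k v u) (A : Finset V) :
    Bf2 k (fun u => if u ∈ A then (-1 : ℤ) else 0) = 2 * deltaA k A := by
  have key : ∀ u v : V, (k u v : ℤ) *
      ((if u ∈ A then (-1 : ℤ) else 0) - (if v ∈ A then (-1 : ℤ) else 0)) ^ 2
      = (if u ∈ A then (if v ∈ A then 0 else (k u v : ℤ))
         else (if v ∈ A then (k u v : ℤ) else 0)) := by
    intro u v; by_cases hu : u ∈ A <;> by_cases hv : v ∈ A <;> simp [hu, hv]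
  unfold Bf2
  simp only [key]
  rw [← Finset.sum_add_sum_compl A]
  have e1 : (∑ u ∈ A, ∑ v, (if u ∈ A then (if v ∈ A then 0 else (k u v : ℤ))
      else (if v ∈ A then (k u v : ℤ) else 0))) = deltaA k A := by
    refine Finset.sum_congr rfl fun u hu => ?_
    simp only [if_pos hu]
    exact sum_ite_not_mem_eq A _
  have e2 : (∑ u ∈ Aᶜ, ∑ v, (if u ∈ A then (if v ∈ A then 0 else (k u v : ℤ))
      else (if v ∈ A then (k u v : ℤ) else 0))) = deltaA k A := by
    have h1 : ∀ u ∈ Aᶜ, (∑ v, (if u ∈ A then (if v ∈ A then 0 else (k u v : ℤ))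
        else (if v ∈ A then (k u v : ℤ) else 0))) = ∑ v ∈ A, (k u v : ℤ) := by
      intro u hu
      simp only [if_neg (Finset.mem_compl.mp hu)]
      exact _root_.sum_ite_mem_eq A _
    rw [Finset.sum_congr rfl h1, Finset.sum_comm]
    unfold deltaA
    refine Finset.sum_congr rfl fun v hv => Finset.sum_congr rfl fun u hu => ?_
    rw [hsym]
  rw [e1, e2]
  ring

lemma Bf2_nonneg (k : V → V → ℕ) (z : V → ℤ) : 0 ≤ Bf2 k z := by
  refine Finset.sum_nonneg fun u _ => Finset.sum_nonneg fun v _ => ?_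
  positivity

lemma walk_bound (k : V → V → ℕ) (z : V → ℤ) (s : ℤ)
    (hs : ∀ a b : V, (graphOf k).Adj a b → |z a - z b| ≤ s) :
    ∀ u v : V, ∀ p : (graphOf k).Walk u v, |z u - z v| ≤ p.length * s := by
  intro u v p
  induction p with
  | nil => simp
  | @cons a x c h p ih =>
      have h1 : |z a - z c| ≤ |z a - z x| + |z x - z c| := by
        have : z a - z c = (z a - z x) + (z x - z c) := by ring
        rw [this]; exact abs_add_le _ _
      have h2 := hs a x h
      calc |z a - z c| ≤ |z a - z x| + |z x - z c| := h1
        _ ≤ s + p.length * s := add_le_add h2 ih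
        _ = (p.length + 1) * s := by ring
        _ = (SimpleGraph.Walk.cons h p).length * s := by
            rw [SimpleGraph.Walk.length_cons]; push_cast; ring

lemma coercive (k : V → V → ℕ) (hsym : ∀ u v, k u v = k v u)
    (hconn : (graphOf k).Connected) (r : V → ℤ) (hr : ∑ v, r v = 0) :
    ∃ b : ℤ, ∀ z : V → ℤ, b ≤ Bf2 k z + ∑ v, r v * z v := by
  have hne : Nonempty V := hconn.nonempty
  obtain ⟨v0⟩ := hne
  set n : ℤ := (Fintype.card V : ℤ) with hn
  set c : ℤ := (∑ v, |r v|) * n with hc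
  refine ⟨-c ^ 2, fun z => ?_⟩
  set s : ℕ := (Finset.univ ×ˢ Finset.univ).sup
      (fun p : V × V => if 0 < k p.1 p.2 then (z p.1 - z p.2).natAbs else 0) with hsdef
  have hadj : ∀ a b : V, (graphOf k).Adj a b → |z a - z b| ≤ (s : ℤ) := by
    intro a b hab
    have hk : 0 < k a b := by
      rcases hab.2 with h | h
      · exact h
      · rw [hsym]; exact h
    have hmem : (a, b) ∈ Finset.univ ×ˢ Finset.univ := by simp
    have h2 : (z a - z b).natAbs ≤ s := by
      simpa only [hk, ↓reduceIte] using Finset.le_sup (f := fun p : V × V =>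
        if 0 < k p.1 p.2 then (z p.1 - z p.2).natAbs else 0) hmem
    calc |z a - z b| = ((z a - z b).natAbs : ℤ) := Int.abs_eq_natAbs _
      _ ≤ (s : ℤ) := by exact_mod_cast h2
  have hdist : ∀ v : V, |z v - z v0| ≤ n * (s : ℤ) := by
    intro v
    obtain ⟨p⟩ := hconn v v0
    have hb := walk_bound k z (s : ℤ) hadj v v0 p.toPath.1
    have hlen : (p.toPath.1.length : ℤ) ≤ n := by
      have := p.toPath.2.length_lt
      rw [hn]; exact_mod_cast this.le
    calc |z v - z v0| ≤ p.toPath.1.length * (s : ℤ) := hb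
      _ ≤ n * (s : ℤ) := by
          apply mul_le_mul_of_nonneg_right hlen (by positivity)
  have hsum : |∑ v, r v * z v| ≤ c * (s : ℤ) := by
    have e : (∑ v, r v * z v) = ∑ v, r v * (z v - z v0) := by
      have : (∑ v, r v * (z v - z v0)) = (∑ v, r v * z v) - (∑ v, r v) * z v0 := by
        rw [Finset.sum_mul, ← Finset.sum_sub_distrib]
        refine Finset.sum_congr rfl fun v _ => by ring
      rw [this, hr]; ring
    rw [e]
    calc |∑ v, r v * (z v - z v0)| ≤ ∑ v, |r v * (z v - z v0)| :=
          Finset.abs_sum_le_sum_abs _ _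
      _ ≤ ∑ v, |r v| * (n * (s : ℤ)) := by
          refine Finset.sum_le_sum fun v _ => ?_
          rw [abs_mul]
          exact mul_le_mul_of_nonneg_left (hdist v) (abs_nonneg _)
      _ = c * (s : ℤ) := by rw [← Finset.sum_mul, hc]; ring
  have hBf : ((s : ℤ)) ^ 2 ≤ Bf2 k z := by
    rcases Nat.eq_zero_or_pos s with h0 | hpos
    · rw [h0]; simpa using Bf2_nonneg k z
    · obtain ⟨⟨a, b⟩, _, hab⟩ := Finset.exists_mem_eq_sup (Finset.univ ×ˢ Finset.univ)
        ⟨(v0, v0), by simp⟩ (fun p : V × V =>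
          if 0 < k p.1 p.2 then (z p.1 - z p.2).natAbs else 0)
      rw [← hsdef] at hab
      by_cases hk : 0 < k a b
      · rw [if_pos hk] at hab
        have h1 : ((s : ℤ)) ^ 2 = (z a - z b) ^ 2 := by
          have hna : ((z a - z b).natAbs : ℤ) = |z a - z b| := (Int.abs_eq_natAbs _).symm
          rw [hab, hna, sq_abs]
        have h2 : (z a - z b) ^ 2 ≤ (k a b : ℤ) * (z a - z b) ^ 2 := by
          nlinarith [sq_nonneg (z a - z b), (by exact_mod_cast hk : (1 : ℤ) ≤ (k a b : ℤ))]
        have h3 : (k a b : ℤ) * (z a - z b) ^ 2 ≤ Bf2 k z := by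
          unfold Bf2
          have inner : (k a b : ℤ) * (z a - z b) ^ 2 ≤ ∑ v, (k a v : ℤ) * (z a - z v) ^ 2 :=
            Finset.single_le_sum (f := fun v => (k a v : ℤ) * (z a - z v) ^ 2)
              (fun v _ => by positivity) (Finset.mem_univ b)
          refine le_trans inner ?_
          exact Finset.single_le_sum (f := fun u => ∑ v, (k u v : ℤ) * (z u - z v) ^ 2)
            (fun u _ => Finset.sum_nonneg fun v _ => by positivity) (Finset.mem_univ a)
        linarith
      · rw [if_neg hk] at hab; omega
  have hcs : 0 ≤ c := by
    rw [hc, hn]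
    have : 0 ≤ ∑ v, |r v| := Finset.sum_nonneg fun v _ => abs_nonneg _
    positivity
  have hss : (0 : ℤ) ≤ (s : ℤ) := by positivity
  have habs := (abs_le.mp hsum).1
  nlinarith [sq_nonneg ((s : ℤ) - c), mul_nonneg hcs hss, hBf, habs]

/-- On a stable weighted graph of genus `g ≥ 2`, every equivalence
class of multidegrees of total degree `D` modulo `Λ` contains a balanced one. -/
theorem stmt2 (V : Type) [Fintype V] [DecidableEq V] (k : V → V → ℕ) (w : V → ℕ)
    (hsym : ∀ u v, k u v = k v u) (hstab : IsStable k w) (hg : 2 ≤ genus k w)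
    (D : ℤ) (d0 : V → ℤ) (h0 : degA d0 Finset.univ = D) :
    ∃ d : V → ℤ, IsBalanced k w D d ∧ d - d0 ∈ Lambda k := by
  classical
  set M : ℤ := 2 * genus k w - 2 with hMdef
  have hM1 : 1 ≤ M := by rw [hMdef]; linarith
  set t : V → ℤ := fun v =>
    2 * (w v : ℤ) - 2 + 2 * (k v v : ℤ) + ∑ u ∈ Finset.univ.erase v, (k u v : ℤ) with htdef
  have hwA : ∀ A : Finset V, wA k w A = ∑ v ∈ A, t v := fun A => rfl
  have hsumt : (∑ v, t v) = M := by
    rw [← hwA Finset.univ, wA_univ_eq k w hsym, hMdef]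
  have hd0sum : (∑ v, d0 v) = D := h0
  set r : V → ℤ := fun v => 4 * (D * t v - M * d0 v) with hrdef
  have hrsum : (∑ v, r v) = 0 := by
    have e : (∑ v, r v) = 4 * D * (∑ v, t v) - 4 * M * (∑ v, d0 v) := by
      rw [Finset.mul_sum, Finset.mul_sum, ← Finset.sum_sub_distrib]
      exact Finset.sum_congr rfl fun v _ => by simp only [hrdef]; ring
    rw [e, hsumt, hd0sum]; ring
  set Ψ : (V → ℤ) → ℤ := fun z => M * Bf2 k z + ∑ v, r v * z v with hPsi
  obtain ⟨b, hb⟩ := coercive k hsym hstab.1 r hrsum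
  have hbd : ∀ z, b ≤ Ψ z := by
    intro z
    have h1 : Bf2 k z ≤ M * Bf2 k z := le_mul_of_one_le_left (Bf2_nonneg k z) hM1
    have h2 := hb z
    simp only [hPsi]
    linarith
  obtain ⟨lb, ⟨⟨z0, hz0⟩, hmin⟩⟩ := Int.exists_least_of_bdd (P := fun m => ∃ z, Ψ z = m)
    ⟨b, fun m hm => by obtain ⟨z, hz⟩ := hm; rw [← hz]; exact hbd z⟩
    ⟨Ψ (fun _ => 0), ⟨_, rfl⟩⟩
  have hz0min : ∀ z, Ψ z0 ≤ Ψ z := by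
    intro z
    rw [hz0]
    exact hmin _ ⟨z, rfl⟩
  refine ⟨d0 + czv k z0, ⟨?_, ?_⟩, ?_⟩
  · unfold degA
    simp only [Pi.add_apply]
    rw [Finset.sum_add_distrib, sum_czv k hsym z0, hd0sum, add_zero]
  · intro A
    set y : V → ℤ := fun u => if u ∈ A then (-1 : ℤ) else 0 with hy
    have hkey := hz0min (z0 + y)
    have hsplit : (∑ v, r v * (z0 + y) v) = (∑ v, r v * z0 v) + ∑ v, r v * y v := by
      simp only [Pi.add_apply]
      rw [← Finset.sum_add_distrib]
      exact Finset.sum_congr rfl fun v _ => by ring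
    have hexp : Ψ (z0 + y) =
        Ψ z0 + (M * (2 * Cf k z0 y + Bf2 k y) + ∑ v, r v * y v) := by
      simp only [hPsi]
      rw [Bf2_expand, hsplit]
      ring
    have hineq : 0 ≤ M * (2 * Cf k z0 y + Bf2 k y) + ∑ v, r v * y v := by
      rw [hexp] at hkey; linarith
    have hCf : Cf k z0 y = -2 * ∑ u, y u * czv k z0 u := Cf_eq_sum k hsym z0 y
    have hyc : (∑ u, y u * czv k z0 u) = - ∑ u ∈ A, czv k z0 u := by
      have e : ∀ u, y u * czv k z0 u = if u ∈ A then -(czv k z0 u) else 0 := by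
        intro u; by_cases h : u ∈ A <;> simp [hy, h]
      simp only [e]
      rw [_root_.sum_ite_mem_eq A (fun u => -(czv k z0 u)), Finset.sum_neg_distrib]
    have hry : (∑ v, r v * y v) = - ∑ v ∈ A, r v := by
      have e : ∀ v, r v * y v = if v ∈ A then -(r v) else 0 := by
        intro v; by_cases h : v ∈ A <;> simp [hy, h]
      simp only [e]
      rw [_root_.sum_ite_mem_eq A (fun v => -(r v)), Finset.sum_neg_distrib]
    have hBy : Bf2 k y = 2 * deltaA k A := by
      rw [hy]; exact Bf2_indicator k hsym A
    have hra : (∑ v ∈ A, r v) = 4 * D * (∑ u ∈ A, t u) - 4 * M * (∑ u ∈ A, d0 u) := by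
      rw [Finset.mul_sum, Finset.mul_sum, ← Finset.sum_sub_distrib]
      exact Finset.sum_congr rfl fun v _ => by simp only [hrdef]; ring
    have hdA : (degA (d0 + czv k z0) A) = (∑ u ∈ A, d0 u) + ∑ u ∈ A, czv k z0 u := by
      unfold degA
      simp only [Pi.add_apply]
      rw [Finset.sum_add_distrib]
    have hZ : 4 * D * (∑ u ∈ A, t u) ≤
        2 * M * deltaA k A + 4 * M * degA (d0 + czv k z0) A := by
      rw [hCf, hyc, hry, hBy, hra] at hineq
      rw [hdA]
      nlinarith [hineq]
    have hMQ : (0 : ℚ) < ((M : ℤ) : ℚ) := by exact_mod_cast lt_of_lt_of_le one_pos hM1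
    have hmAeq : mA k w D A =
        (D : ℚ) * ((∑ u ∈ A, t u : ℤ) : ℚ) / ((M : ℤ) : ℚ) - ((deltaA k A : ℤ) : ℚ) / 2 := by
      unfold mA
      rw [hwA A, ← hMdef]
    rw [hmAeq, sub_le_iff_le_add, div_le_iff₀ hMQ]
    have hZQ : (4 : ℚ) * (D : ℚ) * ((∑ u ∈ A, t u : ℤ) : ℚ) ≤
        2 * ((M : ℤ) : ℚ) * ((deltaA k A : ℤ) : ℚ) +
          4 * ((M : ℤ) : ℚ) * ((degA (d0 + czv k z0) A : ℤ) : ℚ) := by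
      exact_mod_cast hZ
    nlinarith [hZQ, hMQ]
  · simpa [add_sub_cancel_left] using czv_mem_Lambda k hsym z0
end
end
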